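/- The Pólya-Gamma integral identity holds: for any real ψ, integer n ≥ 0, and real y, exp(yψ)/(1+exp(ψ))^n = 2^{-n} exp((y - n/2)ψ) ∫₀^∞ exp(-ωψ²/2) g(ω) dω, where g is the density of the Pólya-Gamma PG(n,0) distribution; equivalently, cosh(ψ/2)^{-n} = E[exp(-ωψ²/2)] for ω ~ PG(n,0). -/

import Mathlib

open MeasureTheory ProbabilityTheory Real

namespace PolyaGammaAux

open Filter Finset Topology
open scoped ENNReal NNReal


lemma sinh_prod_aux (u : ℝ) (hu : u ≠ 0) :
    Tendsto (fun n : ℕ => ∏ j ∈ Finset.range n, ((1 : ℝ) + u ^ 2 / ((j : ℝ) + 1) ^ 2))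
      atTop (𝓝 (Real.sinh (π * u) / (π * u))) := by
  have h := Complex.tendsto_euler_sin_prod (Complex.I * u)
  have hIu : (π : ℂ) * (Complex.I * u) ≠ 0 := by
    simp [Real.pi_ne_zero, Complex.I_ne_zero, Complex.ofReal_eq_zero, hu]
  have h2 := h.div_const ((π : ℂ) * (Complex.I * u))
  have key : Tendsto (fun n : ℕ => ((∏ j ∈ Finset.range n,
      ((1 : ℝ) + u ^ 2 / ((j : ℝ) + 1) ^ 2) : ℝ) : ℂ)) atTop
      (𝓝 (Complex.sin (π * (Complex.I * u)) / ((π : ℂ) * (Complex.I * u)))) := by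
    refine h2.congr (fun n => ?_)
    rw [mul_comm ((π:ℂ) * (Complex.I * u)), mul_div_assoc, div_self hIu, mul_one]
    push_cast
    refine Finset.prod_congr rfl fun j _ => ?_
    have h3 : (Complex.I * (u:ℂ)) ^ 2 = -((u:ℂ)^2) := by
      rw [mul_pow, Complex.I_sq]; ring
    rw [h3]; ring
  have hsin : Complex.sin ((π:ℂ) * (Complex.I * u)) = Complex.sinh (π * u) * Complex.I := by
    rw [show (π:ℂ) * (Complex.I * u) = ((π * u : ℝ) : ℂ) * Complex.I by push_cast; ring,
      Complex.sin_mul_I]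
    norm_cast
  have hre : (Complex.sin (π * (Complex.I * u)) / ((π : ℂ) * (Complex.I * u))) =
      ((Real.sinh (π * u) / (π * u) : ℝ) : ℂ) := by
    rw [hsin, show (π:ℂ) * (Complex.I * u) = ((π * u : ℝ) : ℂ) * Complex.I by push_cast; ring]
    rw [mul_div_mul_right _ _ Complex.I_ne_zero]
    push_cast [Complex.ofReal_sinh]
    simp
  rw [hre] at key
  have := (Complex.continuous_re.tendsto _).comp key
  rw [Complex.ofReal_re] at this
  exact this.congr (fun n => by rw [Function.comp_apply, Complex.ofReal_re])

lemma prod_range_two_mul_split (f : ℕ → ℝ) (n : ℕ) :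
    ∏ j ∈ Finset.range (2 * n), f j
      = (∏ m ∈ Finset.range n, f (2 * m)) * ∏ m ∈ Finset.range n, f (2 * m + 1) := by
  induction n with
  | zero => simp
  | succ n ih =>
    rw [show 2 * (n + 1) = (2 * n) + 1 + 1 by ring, Finset.prod_range_succ, Finset.prod_range_succ,
      ih, Finset.prod_range_succ, Finset.prod_range_succ]
    ring

lemma cosh_prod_aux (u : ℝ) :
    Tendsto (fun n : ℕ => ∏ k ∈ Finset.range n, ((1 : ℝ) + 4 * u ^ 2 / (2 * (k : ℝ) + 1) ^ 2))
      atTop (𝓝 (Real.cosh (π * u))) := by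
  rcases eq_or_ne u 0 with rfl | hu
  · simpa using tendsto_const_nhds
  have hπu : π * u ≠ 0 := mul_ne_zero Real.pi_ne_zero hu
  have hsinh : Real.sinh (π * u) ≠ 0 := fun h => hπu
    (Real.sinh_injective (by rw [h, Real.sinh_zero]))
  have hP := sinh_prod_aux u hu
  have hR := (sinh_prod_aux (2 * u) (by simpa using hu)).comp
    (tendsto_id.const_mul_atTop' (zero_lt_two) : Tendsto (fun n : ℕ => 2 * n) atTop atTop)
  have hsplit : ∀ n : ℕ, (∏ j ∈ Finset.range (2 * n), ((1:ℝ) + (2*u) ^ 2 / ((j:ℝ) + 1) ^ 2))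
      = (∏ k ∈ Finset.range n, ((1 : ℝ) + 4 * u ^ 2 / (2 * (k : ℝ) + 1) ^ 2))
        * ∏ j ∈ Finset.range n, ((1:ℝ) + u ^ 2 / ((j:ℝ) + 1) ^ 2) := by
    intro n
    rw [prod_range_two_mul_split (fun j => (1:ℝ) + (2*u) ^ 2 / ((j:ℝ) + 1) ^ 2) n]
    congr 1
    · refine Finset.prod_congr rfl fun m _ => ?_
      push_cast; ring
    · refine Finset.prod_congr rfl fun m _ => ?_
      have h1 : ((2 * m + 1 : ℕ) : ℝ) + 1 = 2 * ((m : ℝ) + 1) := by push_cast; ring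
      rw [h1, mul_pow, mul_pow, mul_div_mul_left _ _ (by norm_num : (2:ℝ)^2 ≠ 0)]
  have hPpos : ∀ n, (0:ℝ) < ∏ j ∈ Finset.range n, ((1:ℝ) + u ^ 2 / ((j:ℝ) + 1) ^ 2) := by
    intro n; exact Finset.prod_pos fun j _ => by positivity
  have hQ : ∀ n : ℕ, (∏ k ∈ Finset.range n, ((1 : ℝ) + 4 * u ^ 2 / (2 * (k : ℝ) + 1) ^ 2))
      = (∏ j ∈ Finset.range (2 * n), ((1:ℝ) + (2*u) ^ 2 / ((j:ℝ) + 1) ^ 2))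
        / ∏ j ∈ Finset.range n, ((1:ℝ) + u ^ 2 / ((j:ℝ) + 1) ^ 2) := by
    intro n; rw [hsplit n, mul_div_cancel_right₀ _ (hPpos n).ne']
  have hLu : Real.sinh (π * u) / (π * u) ≠ 0 := div_ne_zero hsinh hπu
  have h5 := (hR.div hP hLu).congr
    (fun n => by simp only [Pi.div_apply, Function.comp_apply]; exact (hQ n).symm)
  have h6 : Real.sinh (π * (2*u)) / (π * (2*u)) / (Real.sinh (π * u) / (π * u))
      = Real.cosh (π * u) := by
    rw [show π * (2*u) = 2 * (π * u) by ring, Real.sinh_two_mul]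
    field_simp
  rwa [h6] at h5

lemma gammaPDFReal_mul_exp (n : ℕ) (hn : 0 < n) {s : ℝ} (hs : 0 ≤ s) (y : ℝ) :
    gammaPDFReal (n : ℝ) 1 y * Real.exp (-(s * y))
      = ((1+s)^n)⁻¹ * gammaPDFReal (n : ℝ) (1+s) y := by
  unfold gammaPDFReal
  rcases le_or_gt 0 y with hy | hy
  · rw [if_pos hy, if_pos hy]
    have h1 : ((1:ℝ)+s) ^ ((n:ℝ)) = (1+s)^n := by
      rw [Real.rpow_natCast]
    have h2 : (0:ℝ) < 1 + s := by linarith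
    rw [one_rpow, h1]
    rw [show -((1+s)*y) = -(1*y) + -(s*y) by ring, Real.exp_add]
    field_simp
  · rw [if_neg (not_le.mpr hy), if_neg (not_le.mpr hy)]
    ring

lemma gamma_lintegral_exp (n : ℕ) (hn : 0 < n) {s : ℝ} (hs : 0 ≤ s) :
    ∫⁻ y, ENNReal.ofReal (Real.exp (-(s * y))) ∂(gammaMeasure (n : ℝ) 1)
      = ENNReal.ofReal (((1+s)^n)⁻¹) := by
  have h2 : (0:ℝ) < 1 + s := by linarith
  rw [gammaMeasure, lintegral_withDensity_eq_lintegral_mul _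
    (show Measurable (gammaPDF (n:ℝ) 1) from (measurable_gammaPDFReal _ _).ennreal_ofReal)
    (show Measurable fun y : ℝ => ENNReal.ofReal (Real.exp (-(s*y))) by fun_prop)]
  have hpt : ∀ y : ℝ, (gammaPDF (n : ℝ) 1 * fun y => ENNReal.ofReal (Real.exp (-(s * y)))) y
      = ENNReal.ofReal (((1+s)^n)⁻¹) * gammaPDF (n : ℝ) (1+s) y := by
    intro y
    simp only [Pi.mul_apply, gammaPDF]
    rw [← ENNReal.ofReal_mul (gammaPDFReal_nonneg (by positivity) one_pos y),
      gammaPDFReal_mul_exp n hn hs y,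
      ENNReal.ofReal_mul (by positivity)]
  simp_rw [hpt]
  rw [lintegral_const_mul _
      (show Measurable (gammaPDF (n:ℝ) (1+s)) from (measurable_gammaPDFReal _ _).ennreal_ofReal),
    lintegral_gammaPDF_eq_one (by positivity) h2, mul_one]

lemma gamma_lintegral_id (n : ℕ) (hn : 0 < n) :
    ∫⁻ y, ENNReal.ofReal y ∂(gammaMeasure (n : ℝ) 1)
      = ENNReal.ofReal (Real.Gamma ((n : ℝ)+1) / Real.Gamma (n : ℝ)) := by
  have hΓ : (0:ℝ) < Real.Gamma (n : ℝ) := Real.Gamma_pos_of_pos (by positivity)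
  have hΓ1 : (0:ℝ) < Real.Gamma ((n : ℝ)+1) := Real.Gamma_pos_of_pos (by positivity)
  have hreal : ∀ y : ℝ, gammaPDFReal (n : ℝ) 1 y * y
      = (Real.Gamma ((n : ℝ)+1) / Real.Gamma (n : ℝ)) * gammaPDFReal ((n : ℝ)+1) 1 y := by
    intro y
    unfold gammaPDFReal
    rcases le_or_gt 0 y with hy | hy
    · rw [if_pos hy, if_pos hy, one_rpow, one_rpow]
      have hpow : y ^ ((n:ℝ) - 1) * y = y ^ ((n:ℝ) + 1 - 1) := by
        rcases eq_or_lt_of_le hy with rfl | hy0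
        · rw [Real.zero_rpow (by push_cast; simp; positivity : ((n:ℝ) + 1 - 1) ≠ 0)]
          ring
        · rw [show (n:ℝ) + 1 - 1 = ((n:ℝ) - 1) + 1 by ring,
            Real.rpow_add_one hy0.ne']
      have hpow2 : y ^ ((n:ℝ) - 1) * y = y ^ n := by
        rw [hpow, show (n:ℝ)+1-1 = (n:ℝ) by ring, Real.rpow_natCast]
      field_simp
      linear_combination hpow
    · rw [if_neg (not_le.mpr hy), if_neg (not_le.mpr hy)]
      ring
  rw [gammaMeasure, lintegral_withDensity_eq_lintegral_mul _
    (show Measurable (gammaPDF (n:ℝ) 1) from (measurable_gammaPDFReal _ _).ennreal_ofReal)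
    ENNReal.measurable_ofReal]
  have hpt : ∀ y : ℝ, (gammaPDF (n : ℝ) 1 * fun y => ENNReal.ofReal y) y
      = ENNReal.ofReal (Real.Gamma ((n : ℝ)+1) / Real.Gamma (n : ℝ))
        * gammaPDF ((n : ℝ)+1) 1 y := by
    intro y
    simp only [Pi.mul_apply, gammaPDF]
    rw [← ENNReal.ofReal_mul (gammaPDFReal_nonneg (by positivity) one_pos y), hreal y,
      ENNReal.ofReal_mul (by positivity)]
  simp_rw [hpt]
  rw [lintegral_const_mul _
      (show Measurable (gammaPDF ((n:ℝ)+1) 1) from (measurable_gammaPDFReal _ _).ennreal_ofReal),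
    lintegral_gammaPDF_eq_one (by positivity) one_pos, mul_one]

lemma lintegral_prod_exp_indep {Ω : Type*} [MeasurableSpace Ω]
    (P : Measure Ω) [IsProbabilityMeasure P]
    (g : ℕ → Ω → ℝ) (hmeas : ∀ k, Measurable (g k))
    (hindep : iIndepFun g P)
    (s : ℕ → ℝ) (N : ℕ) :
    ∫⁻ x, ∏ k ∈ Finset.range N, ENNReal.ofReal (Real.exp (-(s k * g k x))) ∂P
      = ∏ k ∈ Finset.range N, ∫⁻ x, ENNReal.ofReal (Real.exp (-(s k * g k x))) ∂P := by
  set h : ℕ → Ω → ℝ≥0∞ := fun k x => ENNReal.ofReal (Real.exp (-(s k * g k x))) with hh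
  have hhmeas : ∀ k, Measurable (h k) := fun k =>
    (((hmeas k).const_mul (s k)).neg.exp).ennreal_ofReal
  have hhindep : iIndepFun h P := by
    exact hindep.comp (fun k y => ENNReal.ofReal (Real.exp (-(s k * y))))
      (fun k => ((measurable_id.const_mul (s k)).neg.exp).ennreal_ofReal)
  induction N with
  | zero => simp
  | succ N ih =>
    rw [Finset.prod_range_succ]
    have hindepN := hhindep.indepFun_prod_range_succ hhmeas N
    have hprodmeas : Measurable (∏ k ∈ Finset.range N, h k) := by
      rw [show (∏ k ∈ Finset.range N, h k) = fun a => ∏ k ∈ Finset.range N, h k a by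
        funext a; simp [Finset.prod_apply]]
      exact Finset.measurable_prod _ (fun k _ => hhmeas k)
    have hstep : ∀ x, ∏ k ∈ Finset.range (N+1), h k x
        = (∏ k ∈ Finset.range N, h k x) * h N x := fun x => Finset.prod_range_succ _ N
    calc ∫⁻ x, ∏ k ∈ Finset.range (N+1), h k x ∂P
        = ∫⁻ x, (∏ k ∈ Finset.range N, h k x) * h N x ∂P := by
          apply lintegral_congr; intro x; exact hstep x
      _ = ∫⁻ x, ((∏ k ∈ Finset.range N, h k) * h N) x ∂P := by
          congr 1; funext x; simp [Finset.prod_apply]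
      _ = (∫⁻ x, (∏ k ∈ Finset.range N, h k) x ∂P) * ∫⁻ x, h N x ∂P :=
          lintegral_mul_eq_lintegral_mul_lintegral_of_indepFun hprodmeas (hhmeas N) hindepN
      _ = (∏ k ∈ Finset.range N, ∫⁻ x, h k x ∂P) * ∫⁻ x, h N x ∂P := by
          rw [← ih]; congr 1; apply lintegral_congr; intro x; simp [Finset.prod_apply, hh]

end PolyaGammaAux

open PolyaGammaAux Filter Finset Topology
open scoped ENNReal NNReal

/-- The Pólya-Gamma integral identity: if `ω = (1/(2π²)) ∑_{k≥1} g_k/((k-1/2)²)`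
with `g_k` i.i.d. `Gamma(n,1)` random variables (so `ω ~ PG(n,0)`), then for any
real `ψ` and `y`,
`exp(yψ)/(1+exp ψ)^n = 2^{-n} exp((y - n/2)ψ) E[exp(-ω ψ²/2)]`. -/
theorem polyaGamma_identity {Ω : Type*} [MeasurableSpace Ω]
    (P : Measure Ω) [IsProbabilityMeasure P] (n : ℕ)
    (g : ℕ → Ω → ℝ)
    (hmeas : ∀ k, Measurable (g k))
    (hindep : iIndepFun g P)
    (hdist : ∀ k, P.map (g k) = gammaMeasure (n : ℝ) 1)
    (ω : Ω → ℝ)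
    (hω : ∀ x, ω x = (1 / (2 * π ^ 2)) *
        ∑' k : ℕ, g k x / ((k : ℝ) + 1 / 2) ^ 2)
    (ψ y : ℝ) :
    Real.exp (y * ψ) / (1 + Real.exp ψ) ^ n
      = 2 ^ (-(n : ℝ)) * Real.exp ((y - n / 2) * ψ)
          * ∫ x, Real.exp (-(ω x) * ψ ^ 2 / 2) ∂P := by
  rcases Nat.eq_zero_or_pos n with hn0 | hn
  · -- n = 0 : hypotheses are contradictory
    exfalso
    have h1 : IsProbabilityMeasure (P.map (g 0)) :=
      Measure.isProbabilityMeasure_map (hmeas 0).aemeasurable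
    have h2 : (P.map (g 0)) Set.univ = 1 := measure_univ
    rw [hdist 0] at h2
    have h3 : gammaMeasure (n : ℝ) 1 = 0 := by
      subst hn0
      have hpdf : gammaPDF ((0:ℕ) : ℝ) 1 = fun _ => 0 := by
        funext x
        simp [gammaPDF_eq, gammaPDFReal, Real.Gamma_zero]
      rw [gammaMeasure, hpdf]
      exact withDensity_zero
    rw [h3] at h2
    simp at h2
  -- main case
  set a : ℕ → ℝ := fun k => ((k : ℝ) + 1/2)^2 with ha_def
  have hapos : ∀ k, 0 < a k := fun k => by positivity
  set c : ℝ := 1 / (2 * π ^ 2) with hc_def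
  have hcpos : 0 < c := by rw [hc_def]; positivity
  set t : ℝ := ψ ^ 2 / 2 with ht_def
  have ht : 0 ≤ t := by rw [ht_def]; positivity
  set s : ℕ → ℝ := fun k => t * c / a k with hs_def
  have hs : ∀ k, 0 ≤ s k := fun k => div_nonneg (mul_nonneg ht hcpos.le) (hapos k).le
  -- a.e. nonnegativity
  have hg0 : ∀ᵐ x ∂P, ∀ k, 0 ≤ g k x := by
    rw [ae_all_iff]
    intro k
    rw [ae_iff]
    have hset : {x | ¬ 0 ≤ g k x} = g k ⁻¹' Set.Iio 0 := by
      ext x; simp [not_le]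
    rw [hset, ← Measure.map_apply (hmeas k) measurableSet_Iio, hdist k, gammaMeasure,
      withDensity_apply _ measurableSet_Iio, lintegral_gammaPDF_of_nonpos le_rfl]
  -- a.e. summability
  have hsummae : ∀ᵐ x ∂P, Summable (fun k => g k x / a k) := by
    set G : ℕ → Ω → ℝ≥0∞ := fun k x => ENNReal.ofReal (g k x / a k) with hG_def
    have hGmeas : ∀ k, Measurable (G k) := fun k =>
      ((hmeas k).div_const (a k)).ennreal_ofReal
    have hGint : ∀ k, ∫⁻ x, G k x ∂P
        = ENNReal.ofReal (Real.Gamma ((n : ℝ)+1) / Real.Gamma (n : ℝ))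
          * ENNReal.ofReal (a k)⁻¹ := by
      intro k
      have hmap : ∫⁻ x, G k x ∂P = ∫⁻ y, ENNReal.ofReal (y / a k) ∂(P.map (g k)) :=
        (lintegral_map (measurable_id.div_const (a k)).ennreal_ofReal (hmeas k)).symm
      rw [hmap, hdist k]
      have hpt : ∀ y : ℝ, ENNReal.ofReal (y / a k)
          = ENNReal.ofReal y * ENNReal.ofReal (a k)⁻¹ := by
        intro y
        rw [div_eq_mul_inv, ENNReal.ofReal_mul' (by positivity)]
      simp_rw [hpt]
      rw [lintegral_mul_const _ ENNReal.measurable_ofReal, gamma_lintegral_id n hn]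
    have hsumfin : ∑' k, ENNReal.ofReal (a k)⁻¹ ≠ ∞ := by
      have hsummand : Summable (fun k : ℕ => (a k)⁻¹) := by
        have hbase : Summable (fun k : ℕ => (((k : ℝ) + 1) ^ 2)⁻¹) := by
          have := (summable_nat_add_iff 1).mpr
            (Real.summable_one_div_nat_pow.mpr (le_refl 2))
          refine this.congr fun k => ?_
          push_cast
          rw [one_div]
        refine Summable.of_nonneg_of_le (fun k => by positivity) (fun k => ?_)
          (hbase.mul_left 4)
        have h1 : ((k:ℝ)+1)^2/4 ≤ a k := by
          show ((k:ℝ)+1)^2/4 ≤ ((k:ℝ) + 1/2)^2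
          nlinarith [Nat.cast_nonneg (α := ℝ) k]
        calc (a k)⁻¹ ≤ (((k:ℝ)+1)^2/4)⁻¹ := inv_anti₀ (by positivity) h1
          _ = 4 * (((k:ℝ)+1)^2)⁻¹ := by rw [inv_div, div_eq_mul_inv]
      rw [← ENNReal.ofReal_tsum_of_nonneg (fun k => by positivity) hsummand]
      exact ENNReal.ofReal_ne_top
    have htot : ∫⁻ x, ∑' k, G k x ∂P ≠ ∞ := by
      rw [lintegral_tsum (fun k => (hGmeas k).aemeasurable)]
      simp_rw [hGint]
      rw [ENNReal.tsum_mul_left]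
      exact ENNReal.mul_ne_top ENNReal.ofReal_ne_top hsumfin
    have hae : ∀ᵐ x ∂P, (∑' k, G k x) < ∞ :=
      ae_lt_top (Measurable.ennreal_tsum hGmeas) htot
    filter_upwards [hae, hg0] with x hx hx0
    have hnn : ∀ k, 0 ≤ g k x / a k := fun k => div_nonneg (hx0 k) (hapos k).le
    set f : ℕ → ℝ≥0 := fun k => (g k x / a k).toNNReal with hf_def
    have hcoe : ∀ k, ((f k : ℝ≥0) : ℝ≥0∞) = G k x := fun k => rfl
    have hsumf : Summable f := by
      apply ENNReal.tsum_coe_ne_top_iff_summable.mp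
      rw [show (∑' k, ((f k : ℝ≥0) : ℝ≥0∞)) = ∑' k, G k x from tsum_congr hcoe]
      exact hx.ne
    have := NNReal.summable_coe.mpr hsumf
    refine this.congr fun k => ?_
    rw [hf_def]
    exact Real.coe_toNNReal _ (hnn k)
  -- pointwise convergence on the good set
  have hgood : ∀ᵐ x ∂P, (∀ k, 0 ≤ g k x) ∧ Summable (fun k => g k x / a k) :=
    hg0.and hsummae
  have hpart : ∀ x, (∀ k, 0 ≤ g k x) → Summable (fun k => g k x / a k) →
      Tendsto (fun N => ∑ k ∈ Finset.range N, s k * g k x) atTop (𝓝 (t * ω x)) := by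
    intro x h1 h2
    have hrw : (fun k => s k * g k x) = fun k => (t * c) * (g k x / a k) := by
      funext k
      rw [hs_def]
      field_simp
    have hsum : Summable (fun k => s k * g k x) := by rw [hrw]; exact h2.mul_left _
    have htsum : ∑' k, s k * g k x = t * ω x := by
      rw [hrw, tsum_mul_left, hω x]
      show t * c * (∑' k, g k x / a k) = t * (c * ∑' (k : ℕ), g k x / ((k : ℝ) + 1 / 2) ^ 2)
      rw [ha_def]
      ring
    have := hsum.hasSum.tendsto_sum_nat
    rwa [htsum] at this
  set A : ℝ≥0∞ := ∫⁻ x, ENNReal.ofReal (Real.exp (-(t * ω x))) ∂P with hA_def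
  have hFmeas : ∀ N : ℕ, Measurable
      (fun x => ENNReal.ofReal (Real.exp (-(∑ k ∈ Finset.range N, s k * g k x)))) := by
    intro N
    apply Measurable.ennreal_ofReal
    apply Measurable.exp
    apply Measurable.neg
    exact Finset.measurable_sum _ (fun k _ => (hmeas k).const_mul (s k))
  have hdom : Tendsto (fun N => ∫⁻ x,
      ENNReal.ofReal (Real.exp (-(∑ k ∈ Finset.range N, s k * g k x))) ∂P) atTop (𝓝 A) := by
    refine tendsto_lintegral_of_dominated_convergence (fun _ => 1) hFmeas ?_ (by simp) ?_
    · intro N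
      filter_upwards [hg0] with x hx
      refine ENNReal.ofReal_le_one.mpr (Real.exp_le_one_iff.mpr ?_)
      have : 0 ≤ ∑ k ∈ Finset.range N, s k * g k x :=
        Finset.sum_nonneg fun k _ => mul_nonneg (hs k) (hx k)
      linarith
    · filter_upwards [hgood] with x hx
      have h := hpart x hx.1 hx.2
      exact (ENNReal.continuous_ofReal.tendsto _).comp
        ((Real.continuous_exp.tendsto _).comp h.neg)
  have hper : ∀ k, ∫⁻ x, ENNReal.ofReal (Real.exp (-(s k * g k x))) ∂P
      = ENNReal.ofReal (((1 + s k)^n)⁻¹) := by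
    intro k
    have hstep : ∫⁻ x, ENNReal.ofReal (Real.exp (-(s k * g k x))) ∂P
        = ∫⁻ z, ENNReal.ofReal (Real.exp (-(s k * z))) ∂(P.map (g k)) :=
      (lintegral_map
        (show Measurable fun z : ℝ => ENNReal.ofReal (Real.exp (-(s k * z))) by fun_prop)
        (hmeas k)).symm
    rw [hstep, hdist k, gamma_lintegral_exp n hn (hs k)]
  have hLN : ∀ N : ℕ, ∫⁻ x,
      ENNReal.ofReal (Real.exp (-(∑ k ∈ Finset.range N, s k * g k x))) ∂P
      = ENNReal.ofReal (((∏ k ∈ Finset.range N, (1 + s k))^n)⁻¹) := by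
    intro N
    have hpt : ∀ x, ENNReal.ofReal (Real.exp (-(∑ k ∈ Finset.range N, s k * g k x)))
        = ∏ k ∈ Finset.range N, ENNReal.ofReal (Real.exp (-(s k * g k x))) := by
      intro x
      rw [← ENNReal.ofReal_prod_of_nonneg (fun k _ => (Real.exp_pos _).le), ← Real.exp_sum]
      congr 1
      rw [Finset.sum_neg_distrib]
    simp_rw [hpt]
    rw [lintegral_prod_exp_indep P g hmeas hindep s N]
    simp_rw [hper]
    rw [← ENNReal.ofReal_prod_of_nonneg (fun k _ => by positivity)]
    congr 1
    rw [Finset.prod_inv_distrib, Finset.prod_pow]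
  have hcosh : Tendsto (fun N => ∏ k ∈ Finset.range N, (1 + s k)) atTop
      (𝓝 (Real.cosh (ψ/2))) := by
    have h := cosh_prod_aux (ψ/(2*π))
    have hπ2 : π * (ψ/(2*π)) = ψ/2 := by
      field_simp
    rw [hπ2] at h
    refine h.congr fun N => Finset.prod_congr rfl fun k _ => ?_
    rw [hs_def]
    show 1 + 4 * (ψ / (2 * π)) ^ 2 / (2 * (k:ℝ) + 1) ^ 2 = 1 + t * c / a k
    rw [ht_def, hc_def, ha_def]
    have hk : (2*(k:ℝ)+1) ≠ 0 := by positivity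
    have hk2 : ((k:ℝ)+1/2) ≠ 0 := by positivity
    field_simp
    ring
  have hlim2 : Tendsto (fun N => ENNReal.ofReal (((∏ k ∈ Finset.range N, (1 + s k))^n)⁻¹))
      atTop (𝓝 (ENNReal.ofReal ((Real.cosh (ψ/2)^n)⁻¹))) := by
    have h1 : Tendsto (fun N => ((∏ k ∈ Finset.range N, (1 + s k))^n)⁻¹) atTop
        (𝓝 ((Real.cosh (ψ/2)^n)⁻¹)) :=
      (hcosh.pow n).inv₀ (pow_ne_zero n (Real.cosh_pos _).ne')
    exact (ENNReal.continuous_ofReal.tendsto _).comp h1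
  have hA : A = ENNReal.ofReal ((Real.cosh (ψ/2)^n)⁻¹) :=
    tendsto_nhds_unique (Tendsto.congr hLN hdom) hlim2
  -- convert the Bochner integral
  have hWmeas : Measurable (fun x =>
      Real.exp (-(c * (∑' k, ENNReal.ofReal (g k x / a k)).toReal) * ψ^2/2)) := by
    have h1 : Measurable (fun x => (∑' k, ENNReal.ofReal (g k x / a k)).toReal) :=
      (Measurable.ennreal_tsum (fun k => ((hmeas k).div_const (a k)).ennreal_ofReal)).ennreal_toReal
    fun_prop
  have hωW : (fun x => Real.exp (-(c * (∑' k, ENNReal.ofReal (g k x / a k)).toReal) * ψ^2/2))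
      =ᵐ[P] (fun x => Real.exp (-(ω x) * ψ^2/2)) := by
    filter_upwards [hgood] with x hx
    have hnn : ∀ k, 0 ≤ g k x / a k := fun k => div_nonneg (hx.1 k) (hapos k).le
    have h2 : (∑' k, ENNReal.ofReal (g k x / a k)).toReal = ∑' k, g k x / a k := by
      rw [← ENNReal.ofReal_tsum_of_nonneg hnn hx.2,
        ENNReal.toReal_ofReal (tsum_nonneg hnn)]
    rw [h2, hω x]
  have haesm : AEStronglyMeasurable (fun x => Real.exp (-(ω x) * ψ^2/2)) P :=
    hWmeas.aestronglyMeasurable.congr hωW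
  have hint : ∫ x, Real.exp (-(ω x) * ψ^2/2) ∂P = ((Real.cosh (ψ/2))^n)⁻¹ := by
    rw [integral_eq_lintegral_of_nonneg_ae (ae_of_all _ fun x => (Real.exp_pos _).le) haesm]
    have hpt : ∀ x, ENNReal.ofReal (Real.exp (-(ω x) * ψ^2/2))
        = ENNReal.ofReal (Real.exp (-(t * ω x))) := by
      intro x
      congr 1
      rw [ht_def]
      ring_nf
    simp_rw [hpt]
    rw [← hA_def, hA, ENNReal.toReal_ofReal (by positivity)]
  rw [hint]
  -- final algebra
  have hcoshpos : 0 < Real.cosh (ψ/2) := Real.cosh_pos _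
  have he : Real.exp ψ = Real.exp (ψ/2) * Real.exp (ψ/2) := by
    rw [← Real.exp_add]
    norm_num
  have he2 : Real.exp (ψ/2) * Real.exp (-(ψ/2)) = 1 := by
    rw [← Real.exp_add]
    simp
  have hsplit2 : 1 + Real.exp ψ = 2 * Real.exp (ψ/2) * Real.cosh (ψ/2) := by
    rw [Real.cosh_eq]
    linear_combination he - he2
  have he3 : Real.exp (y*ψ) = Real.exp ((y - n/2)*ψ) * Real.exp (ψ/2)^n := by
    rw [← Real.exp_nat_mul, ← Real.exp_add]
    congr 1
    ring
  rw [hsplit2, mul_pow, mul_pow, Real.rpow_neg (by norm_num : (0:ℝ) ≤ 2),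
    Real.rpow_natCast, he3]
  have h2n : (0:ℝ) < 2^n := by positivity
  have hen : (0:ℝ) < Real.exp (ψ/2)^n := by positivity
  have hcn : (0:ℝ) < Real.cosh (ψ/2)^n := by positivity
  field_simp
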